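/- For every real a ≥ 3 and every real y with |y| ≤ 2π, one has |f_a((1 - a)/2 + iy)| ≥ a·exp((a + 1)/2)·(a - 1)/2 > √((a + 6·ln a)² + 4π²). (Thus f_a maps the right vertical boundary of the pseudo-rectangle V_a strictly outside the disc of radius √((a + 6·ln a)² + 4π²) about the origin.) -/

import Mathlib

/-- For every real `a ≥ 3` and every real `y` with `|y| ≤ 2π`, one has
`|f_a((1 - a)/2 + iy)| ≥ a e^{(a+1)/2} (a - 1)/2 > √((a + 6 ln a)² + 4π²)`. -/
theorem stmt_7 (a : ℝ) (ha : 3 ≤ a) (y : ℝ) (hy : |y| ≤ 2 * Real.pi) :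
    a * Real.exp ((a + 1) / 2) * ((a - 1) / 2)
      ≤ ‖((fun z : ℂ => (a : ℂ) * (z - (1 - (a : ℂ))) * Complex.exp (z + (a : ℂ)))
          ((((1 - a) / 2 : ℝ) : ℂ) + (y : ℂ) * Complex.I))‖ ∧
    Real.sqrt ((a + 6 * Real.log a) ^ 2 + 4 * Real.pi ^ 2)
      < a * Real.exp ((a + 1) / 2) * ((a - 1) / 2) := by
  have ha0 : (0 : ℝ) < a := by linarith
  have hE : Real.exp 2 ≤ Real.exp ((a + 1) / 2) := by
    apply Real.exp_le_exp.2; linarith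
  have hE7 : (7 : ℝ) ≤ Real.exp ((a + 1) / 2) := by
    have h1 := Real.exp_one_gt_d9
    have : (2.7182818283 : ℝ) ^ 2 ≤ Real.exp 2 := by
      have : Real.exp 2 = Real.exp 1 ^ 2 := by
        rw [← Real.exp_nat_mul]; norm_num
      rw [this]
      nlinarith [Real.exp_pos 1]
    nlinarith
  constructor
  · simp only [norm_mul, Complex.norm_exp]
    have h1 : ‖(a : ℂ)‖ = a := by
      rw [Complex.norm_real, Real.norm_eq_abs, abs_of_pos ha0]
    have h2 : ((((1 - a) / 2 : ℝ) : ℂ) + (y : ℂ) * Complex.I + (a : ℂ)).re = (a + 1) / 2 := by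
      simp [Complex.add_re, Complex.ofReal_re]; ring
    rw [h1, h2]
    have h3 : (a - 1) / 2 ≤
        ‖((((1 - a) / 2 : ℝ) : ℂ) + (y : ℂ) * Complex.I - (1 - (a : ℂ)))‖ := by
      have hre : ((((1 - a) / 2 : ℝ) : ℂ) + (y : ℂ) * Complex.I - (1 - (a : ℂ))).re
          = (a - 1) / 2 := by
        simp [Complex.sub_re, Complex.add_re]; ring
      calc (a - 1) / 2 = |(a-1)/2| := (abs_of_nonneg (by linarith)).symm
        _ = |((((1 - a) / 2 : ℝ) : ℂ) + (y : ℂ) * Complex.I - (1 - (a : ℂ))).re| := by rw [hre]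
        _ ≤ _ := Complex.abs_re_le_norm _
    have := Real.exp_pos ((a + 1) / 2)
    calc a * Real.exp ((a + 1) / 2) * ((a - 1) / 2)
        ≤ a * Real.exp ((a + 1) / 2) *
          ‖((((1 - a) / 2 : ℝ) : ℂ) + (y : ℂ) * Complex.I - (1 - (a : ℂ)))‖ := by
          apply mul_le_mul_of_nonneg_left h3; positivity
      _ = a * ‖((((1 - a) / 2 : ℝ) : ℂ) + (y : ℂ) * Complex.I - (1 - (a : ℂ)))‖ *
          Real.exp ((a + 1) / 2) := by ring
  · have hR : (0 : ℝ) < a * Real.exp ((a + 1) / 2) * ((a - 1) / 2) :=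
      mul_pos (mul_pos ha0 (Real.exp_pos _)) (by linarith)
    rw [show Real.sqrt ((a + 6 * Real.log a) ^ 2 + 4 * Real.pi ^ 2)
        < a * Real.exp ((a + 1) / 2) * ((a - 1) / 2) ↔ _ from Real.sqrt_lt' hR]
    have hlog : Real.log a ≤ a - 1 := Real.log_le_sub_one_of_pos ha0
    have hlog0 : 0 ≤ Real.log a := Real.log_nonneg (by linarith)
    have hpi : Real.pi < 3.15 := by
      have := Real.pi_lt_d2; linarith
    have hpi0 := Real.pi_pos
    have h1 : (a + 6 * Real.log a) ^ 2 ≤ (7 * a - 6) ^ 2 := by nlinarith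
    have h2 : 4 * Real.pi ^ 2 < 40 := by nlinarith
    have h3 : (7 * a - 6) ^ 2 + 40 < (7 / 2 * a * (a - 1)) ^ 2 := by
      nlinarith [sq_nonneg (a - 3), sq_nonneg a, mul_pos ha0 ha0]
    have h4 : 7 / 2 * a * (a - 1) ≤ a * Real.exp ((a + 1) / 2) * ((a - 1) / 2) := by
      nlinarith [mul_nonneg (mul_nonneg ha0.le (show (0:ℝ) ≤ (a-1)/2 by linarith))
        (show (0:ℝ) ≤ Real.exp ((a+1)/2) - 7 by linarith)]
    have h5 : 0 ≤ 7 / 2 * a * (a - 1) := by nlinarith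
    nlinarith [mul_le_mul h4 h4 h5 hR.le]
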